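/- Under the random-effects model where θ̂_ℓ ~ N(θ, τ² + 1/n_ℓ) independently, the DerSimonian–Laird moment identity holds: E[Q] = (k-1) + τ²·(Σ_ℓ n_ℓ - Σ_ℓ n_ℓ²/Σ_ℓ n_ℓ), where Q = Σ_ℓ n_ℓ(θ̂_ℓ - θ̄_w)² and θ̄_w = Σ_ℓ n_ℓ θ̂_ℓ/Σ_ℓ n_ℓ. -/

import Mathlib

open MeasureTheory ProbabilityTheory

section DLhelpers
open Real Set
open scoped NNReal ENNReal

lemma my_odd_int (b : ℝ) : ∫ x : ℝ, x * Real.exp (-(b * x ^ 2)) = 0 := by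
  have h := integral_neg_eq_self (fun x : ℝ => x * Real.exp (-(b * x ^ 2))) (volume : Measure ℝ)
  simp only [neg_sq, neg_mul, integral_neg] at h
  linarith

lemma my_sq_int {b : ℝ} (hb : 0 < b) :
    ∫ x : ℝ, x ^ 2 * Real.exp (-(b * x ^ 2)) = Real.sqrt π * b ^ (-(3:ℝ)/2) / 2 := by
  have hI : Integrable (fun x : ℝ => x ^ 2 * Real.exp (-(b * x ^ 2))) := by
    have := integrable_rpow_mul_exp_neg_mul_sq hb (s := 2) (by norm_num)
    simpa [Real.rpow_natCast, neg_mul] using this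
  have hsplit : ∫ x : ℝ, x ^ 2 * Real.exp (-(b * x ^ 2))
      = (∫ x in Iic (0:ℝ), x ^ 2 * Real.exp (-(b * x ^ 2)))
        + ∫ x in Ioi (0:ℝ), x ^ 2 * Real.exp (-(b * x ^ 2)) := by
    rw [← setIntegral_union (Iic_disjoint_Ioi le_rfl) measurableSet_Ioi hI.integrableOn
      hI.integrableOn, Iic_union_Ioi, setIntegral_univ]
  have hneg : (∫ x in Iic (0:ℝ), x ^ 2 * Real.exp (-(b * x ^ 2)))
      = ∫ x in Ioi (0:ℝ), x ^ 2 * Real.exp (-(b * x ^ 2)) := by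
    have := integral_comp_neg_Ioi (c := (0:ℝ)) (f := fun x => x ^ 2 * Real.exp (-(b * x ^ 2)))
    simp only [neg_zero, neg_sq] at this
    exact this.symm
  have hIoi : (∫ x in Ioi (0:ℝ), x ^ 2 * Real.exp (-(b * x ^ 2)))
      = b ^ (-(3:ℝ)/2) * (1/2) * Real.Gamma (3/2) := by
    have h := integral_rpow_mul_exp_neg_mul_rpow (p := 2) (q := 2) (b := b)
      (by norm_num) (by norm_num) hb
    norm_num at h
    rw [neg_div]
    exact h
  have hGamma : Real.Gamma (3/2) = Real.sqrt π / 2 := by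
    have h1 : (3/2 : ℝ) = 1/2 + 1 := by norm_num
    rw [h1, Real.Gamma_add_one (by norm_num), Real.Gamma_one_half_eq]
    ring
  rw [hsplit, hneg, hIoi, hGamma]; ring


lemma my_pdf0 (v : ℝ≥0) (x : ℝ) :
    gaussianPDFReal 0 v x
      = (Real.sqrt (2 * π * v))⁻¹ * Real.exp (-((2 * (v:ℝ))⁻¹ * x ^ 2)) := by
  simp only [gaussianPDFReal_def, sub_zero, neg_div, div_eq_inv_mul]
  congr 1
  ring

lemma my_vpos {v : ℝ≥0} (hv : v ≠ 0) : (0:ℝ) < v := NNReal.coe_pos.mpr (pos_iff_ne_zero.mpr hv)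

lemma my_int_pdf_id {v : ℝ≥0} (hv : v ≠ 0) :
    Integrable (fun x => gaussianPDFReal 0 v x * x) (volume : Measure ℝ) := by
  have hvp := my_vpos hv
  have hb : (0:ℝ) < (2 * (v:ℝ))⁻¹ := by positivity
  have h := ((integrable_mul_exp_neg_mul_sq hb).const_mul (Real.sqrt (2 * π * v))⁻¹)
  refine h.congr (Filter.Eventually.of_forall fun x => ?_)
  simp only [my_pdf0, neg_mul]
  ring

lemma my_int_pdf_sq {v : ℝ≥0} (hv : v ≠ 0) :
    Integrable (fun x => gaussianPDFReal 0 v x * x ^ 2) (volume : Measure ℝ) := by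
  have hvp := my_vpos hv
  have hb : (0:ℝ) < (2 * (v:ℝ))⁻¹ := by positivity
  have h0 := integrable_rpow_mul_exp_neg_mul_sq hb (s := 2) (by norm_num)
  have h := h0.const_mul (Real.sqrt (2 * π * v))⁻¹
  refine h.congr (Filter.Eventually.of_forall fun x => ?_)
  have hx : (x : ℝ) ^ (2:ℝ) = x ^ (2:ℕ) := by
    rw [show (2:ℝ) = ((2:ℕ):ℝ) by norm_num, Real.rpow_natCast]
  simp only [hx, my_pdf0, neg_mul]
  ring

lemma my_intval_pdf_id (v : ℝ≥0) : ∫ x : ℝ, gaussianPDFReal 0 v x * x = 0 := by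
  have : (fun x : ℝ => gaussianPDFReal 0 v x * x)
      = fun x => (Real.sqrt (2 * π * v))⁻¹ * (x * Real.exp (-((2 * (v:ℝ))⁻¹ * x ^ 2))) := by
    funext x; rw [my_pdf0]; ring
  rw [this, integral_const_mul, my_odd_int]
  ring

lemma my_intval_pdf_sq {v : ℝ≥0} (hv : v ≠ 0) :
    ∫ x : ℝ, gaussianPDFReal 0 v x * x ^ 2 = v := by
  have hvp := my_vpos hv
  have hb : (0:ℝ) < (2 * (v:ℝ))⁻¹ := by positivity
  have : (fun x : ℝ => gaussianPDFReal 0 v x * x ^ 2)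
      = fun x => (Real.sqrt (2 * π * v))⁻¹ * (x ^ 2 * Real.exp (-((2 * (v:ℝ))⁻¹ * x ^ 2))) := by
    funext x; rw [my_pdf0]; ring
  rw [this, integral_const_mul, my_sq_int hb]
  set t : ℝ := 2 * (v:ℝ) with ht
  have htp : (0:ℝ) < t := by positivity
  have h1 : (t⁻¹ : ℝ) ^ (-(3:ℝ)/2) = t ^ ((3:ℝ)/2) := by
    rw [← Real.rpow_neg_one t, ← Real.rpow_mul htp.le]
    norm_num
  have h2 : t ^ ((3:ℝ)/2) = t * Real.sqrt t := by
    rw [show ((3:ℝ)/2) = 1 + 1/2 by norm_num, Real.rpow_add htp, Real.rpow_one,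
      Real.sqrt_eq_rpow]
  have h3 : Real.sqrt (2 * π * v) = Real.sqrt π * Real.sqrt t := by
    rw [← Real.sqrt_mul Real.pi_pos.le, ht]; ring_nf
  rw [h1, h2, h3]
  have hπ : Real.sqrt π ≠ 0 := by positivity
  have htq : Real.sqrt t ≠ 0 := by positivity
  field_simp
  ring

lemma my_gauss_density (m : ℝ) {v : ℝ≥0} (hv : v ≠ 0) :
    gaussianReal m v
      = volume.withDensity (fun x => ((Real.toNNReal (gaussianPDFReal m v x) : ℝ≥0) : ℝ≥0∞)) := by
  rw [gaussianReal_of_var_ne_zero _ hv]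
  rfl

lemma my_gauss_integral (m : ℝ) {v : ℝ≥0} (hv : v ≠ 0) (g : ℝ → ℝ) :
    ∫ x, g x ∂(gaussianReal m v) = ∫ x, gaussianPDFReal m v x * g x := by
  rw [my_gauss_density m hv,
    integral_withDensity_eq_integral_smul ((measurable_gaussianPDFReal m v).real_toNNReal) g]
  refine integral_congr_ae (Filter.Eventually.of_forall fun x => ?_)
  simp [NNReal.smul_def, Real.coe_toNNReal _ (gaussianPDFReal_nonneg m v x)]

lemma my_gauss_integrable (m : ℝ) {v : ℝ≥0} (hv : v ≠ 0) (g : ℝ → ℝ)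
    (h : Integrable (fun x => gaussianPDFReal m v x * g x) (volume : Measure ℝ)) :
    Integrable g (gaussianReal m v) := by
  rw [my_gauss_density m hv,
    integrable_withDensity_iff_integrable_smul ((measurable_gaussianPDFReal m v).real_toNNReal)]
  refine h.congr (Filter.Eventually.of_forall fun x => ?_)
  simp [NNReal.smul_def, Real.coe_toNNReal _ (gaussianPDFReal_nonneg m v x)]

lemma my_dirac_ae (a : ℝ) : ∀ᵐ x ∂(Measure.dirac a), x = a := by
  rw [MeasureTheory.ae_dirac_eq]
  exact Filter.eventually_pure.mpr rfl

lemma my_g0_integrable_id (v : ℝ≥0) : Integrable (fun x : ℝ => x) (gaussianReal 0 v) := by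
  by_cases hv : v = 0
  · rw [hv, gaussianReal_zero_var]
    exact (integrable_const (0:ℝ)).congr ((my_dirac_ae 0).mono fun x hx => hx.symm)
  · exact my_gauss_integrable 0 hv _ (my_int_pdf_id hv)

lemma my_g0_integrable_sq (v : ℝ≥0) : Integrable (fun x : ℝ => x ^ 2) (gaussianReal 0 v) := by
  by_cases hv : v = 0
  · rw [hv, gaussianReal_zero_var]
    exact (integrable_const (0:ℝ)).congr ((my_dirac_ae 0).mono fun x hx => by simp [hx])
  · exact my_gauss_integrable 0 hv _ (my_int_pdf_sq hv)

lemma my_g0_int_id (v : ℝ≥0) : ∫ x, x ∂(gaussianReal 0 v) = 0 := by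
  by_cases hv : v = 0
  · simp [hv]
  · rw [my_gauss_integral 0 hv]
    exact my_intval_pdf_id v

lemma my_g0_int_sq (v : ℝ≥0) : ∫ x, x ^ 2 ∂(gaussianReal 0 v) = v := by
  by_cases hv : v = 0
  · simp [hv]
  · rw [my_gauss_integral 0 hv]
    exact my_intval_pdf_sq hv

lemma my_gauss_shift (m : ℝ) (v : ℝ≥0) :
    gaussianReal m v = (gaussianReal 0 v).map (· + m) := by
  rw [gaussianReal_map_add_const m, zero_add]

lemma my_gauss_integrable_id (m : ℝ) (v : ℝ≥0) :
    Integrable (fun x : ℝ => x) (gaussianReal m v) := by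
  rw [my_gauss_shift m v]
  exact (integrable_map_measure measurable_id.aestronglyMeasurable (by fun_prop)).mpr
    (show Integrable (fun x : ℝ => x + m) _ from
      (my_g0_integrable_id v).add (integrable_const m))

lemma my_gauss_integrable_sq (m : ℝ) (v : ℝ≥0) :
    Integrable (fun x : ℝ => x ^ 2) (gaussianReal m v) := by
  rw [my_gauss_shift m v]
  refine (integrable_map_measure (by fun_prop) (by fun_prop)).mpr ?_
  have h : Integrable (fun x : ℝ => x ^ 2 + 2*m*x + m^2) (gaussianReal 0 v) := by
    exact ((my_g0_integrable_sq v).add ((my_g0_integrable_id v).const_mul (2*m))).add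
      (integrable_const (m^2))
  exact h.congr (Filter.Eventually.of_forall fun x => by simp only [Function.comp_apply]; ring)

lemma my_gauss_int_id (m : ℝ) (v : ℝ≥0) : ∫ x, x ∂(gaussianReal m v) = m := by
  rw [my_gauss_shift m v, integral_map (f := fun x : ℝ => x)
    ((measurable_add_const m)).aemeasurable measurable_id.aestronglyMeasurable]
  rw [integral_add (my_g0_integrable_id v) (integrable_const m), my_g0_int_id,
    integral_const]
  simp

lemma my_gauss_int_sq (m : ℝ) (v : ℝ≥0) :
    ∫ x, x ^ 2 ∂(gaussianReal m v) = m ^ 2 + v := by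
  rw [my_gauss_shift m v, integral_map (f := fun x : ℝ => x ^ 2)
    ((measurable_add_const m)).aemeasurable (by fun_prop)]
  have h12 : Integrable (fun x : ℝ => x ^ 2 + 2*m*x) (gaussianReal 0 v) :=
    (my_g0_integrable_sq v).add ((my_g0_integrable_id v).const_mul (2*m))
  have h2 : Integrable (fun x : ℝ => 2*m*x) (gaussianReal 0 v) :=
    (my_g0_integrable_id v).const_mul (2*m)
  have hexp : (fun x : ℝ => (x + m) ^ 2) = fun x : ℝ => (x ^ 2 + 2*m*x) + m^2 := by
    funext x; ring
  rw [hexp, integral_add h12 (integrable_const (m^2)),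
    integral_add (my_g0_integrable_sq v) h2,
    my_g0_int_sq, integral_const_mul, my_g0_int_id, integral_const]
  simp [add_comm]

end DLhelpers

/-- DerSimonian–Laird moment identity: under the random-effects model where
`θ̂_ℓ ~ N(θ, τ² + 1/n_ℓ)` independently, Cochran's `Q = Σ n_ℓ (θ̂_ℓ - θ̄_w)²` with
`θ̄_w = Σ n_ℓ θ̂_ℓ / Σ n_ℓ` satisfies
`E[Q] = (k-1) + τ² (Σ n_ℓ - Σ n_ℓ² / Σ n_ℓ)`. -/
theorem dersimonian_laird_moment {Ω : Type*} [MeasureSpace Ω]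
    (μ : Measure Ω) [IsProbabilityMeasure μ]
    (k : ℕ) (hk : 2 ≤ k)
    (n : Fin k → ℝ) (hn : ∀ ℓ, 0 < n ℓ) (θ τ2 : ℝ) (hτ2 : 0 ≤ τ2)
    (θhat : Fin k → Ω → ℝ) (hmeas : ∀ ℓ, Measurable (θhat ℓ))
    (hindep : iIndepFun θhat μ)
    (hlaw : ∀ ℓ, μ.map (θhat ℓ) = gaussianReal θ (Real.toNNReal (τ2 + 1 / n ℓ))) :
    ∫ ω, ∑ ℓ, n ℓ * (θhat ℓ ω - (∑ j, n j * θhat j ω) / ∑ j, n j) ^ 2 ∂μ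
      = ((k : ℝ) - 1) + τ2 * ((∑ ℓ, n ℓ) - (∑ ℓ, (n ℓ) ^ 2) / ∑ ℓ, n ℓ) := by
  classical
  set N : ℝ := ∑ j, n j with hN
  have hNpos : 0 < N := Finset.sum_pos (fun j _ => hn j) ⟨⟨0, by omega⟩, Finset.mem_univ _⟩
  have hNne : N ≠ 0 := hNpos.ne'
  set σ2 : Fin k → ℝ := fun ℓ => τ2 + 1 / n ℓ with hσ2
  have hσ2nn : ∀ ℓ, 0 ≤ σ2 ℓ := fun ℓ => by
    have := hn ℓ; rw [hσ2]; positivity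
  have hcoe : ∀ ℓ, ((Real.toNNReal (τ2 + 1 / n ℓ) : NNReal) : ℝ) = σ2 ℓ := fun ℓ =>
    Real.coe_toNNReal _ (hσ2nn ℓ)
  -- integrability of θhat and its square
  have hint1 : ∀ ℓ, Integrable (θhat ℓ) μ := by
    intro ℓ
    have h : Integrable (fun x : ℝ => x) (μ.map (θhat ℓ)) := by
      rw [hlaw ℓ]; exact my_gauss_integrable_id _ _
    exact (integrable_map_measure measurable_id.aestronglyMeasurable
      (hmeas ℓ).aemeasurable).mp h
  have hint2 : ∀ ℓ, Integrable (fun ω => θhat ℓ ω ^ 2) μ := by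
    intro ℓ
    have h : Integrable (fun x : ℝ => x ^ 2) (μ.map (θhat ℓ)) := by
      rw [hlaw ℓ]; exact my_gauss_integrable_sq _ _
    exact (integrable_map_measure (measurable_id.pow_const 2).aestronglyMeasurable
      (hmeas ℓ).aemeasurable).mp h
  -- first and second moments
  have hE1 : ∀ ℓ, ∫ ω, θhat ℓ ω ∂μ = θ := by
    intro ℓ
    have h := integral_map (μ := μ) (φ := θhat ℓ) (f := fun x : ℝ => x)
      ((hmeas ℓ).aemeasurable (μ := μ)) measurable_id.aestronglyMeasurable
    rw [← h, hlaw ℓ, my_gauss_int_id]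
  have hE2 : ∀ ℓ, ∫ ω, θhat ℓ ω ^ 2 ∂μ = θ ^ 2 + σ2 ℓ := by
    intro ℓ
    have h := integral_map (μ := μ) (φ := θhat ℓ) (f := fun x : ℝ => x ^ 2)
      ((hmeas ℓ).aemeasurable (μ := μ)) (measurable_id.pow_const 2).aestronglyMeasurable
    rw [← h, hlaw ℓ, my_gauss_int_sq, hcoe ℓ]
  -- products
  have hprod_int : ∀ i j, Integrable (fun ω => θhat i ω * θhat j ω) μ := by
    intro i j
    rcases eq_or_ne i j with rfl | hij
    · have := hint2 i
      refine this.congr (Filter.Eventually.of_forall fun ω => ?_)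
      simp [pow_two]
    · exact (hindep.indepFun hij).integrable_mul (hint1 i) (hint1 j)
  have hprod_val : ∀ i j, (n i * n j) * ∫ ω, θhat i ω * θhat j ω ∂μ
      = n i * n j * θ ^ 2 + (if i = j then n i ^ 2 * σ2 i else 0) := by
    intro i j
    rcases eq_or_ne i j with rfl | hij
    · rw [if_pos rfl]
      have h : ∫ ω, θhat i ω * θhat i ω ∂μ = θ ^ 2 + σ2 i := by
        rw [← hE2 i]
        refine integral_congr_ae (Filter.Eventually.of_forall fun ω => ?_)
        simp [pow_two]
      rw [h]; ring
    · rw [if_neg hij]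
      have h := (hindep.indepFun hij).integral_mul_eq_mul_integral (hmeas i).aestronglyMeasurable
        (hmeas j).aestronglyMeasurable
      have h' : ∫ ω, θhat i ω * θhat j ω ∂μ = θ * θ := by
        simpa [Pi.mul_apply, hE1 i, hE1 j] using h
      rw [h']; ring
  -- pointwise expansion of Q
  have hptw : ∀ ω : Ω, ∑ ℓ, n ℓ * (θhat ℓ ω - (∑ j, n j * θhat j ω) / N) ^ 2
      = (∑ ℓ, n ℓ * θhat ℓ ω ^ 2) - (∑ j, n j * θhat j ω) ^ 2 / N := by
    intro ω
    set s := ∑ j, n j * θhat j ω with hs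
    have expand : ∀ ℓ ∈ Finset.univ, n ℓ * (θhat ℓ ω - s / N) ^ 2
        = (n ℓ * θhat ℓ ω ^ 2 - (2 * s / N) * (n ℓ * θhat ℓ ω)) + (s / N) ^ 2 * n ℓ :=
      fun ℓ _ => by ring
    rw [Finset.sum_congr rfl expand, Finset.sum_add_distrib, Finset.sum_sub_distrib,
      ← Finset.mul_sum, ← Finset.mul_sum, ← hs, ← hN]
    field_simp
    ring
  -- decompose S^2
  have hS2 : ∀ ω : Ω, (∑ j, n j * θhat j ω) ^ 2
      = ∑ i, ∑ j, (n i * n j) * (θhat i ω * θhat j ω) := by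
    intro ω
    rw [pow_two, Finset.sum_mul_sum]
    exact Finset.sum_congr rfl fun i _ => Finset.sum_congr rfl fun j _ => by ring
  have hS2int : Integrable (fun ω => (∑ j, n j * θhat j ω) ^ 2) μ := by
    have h : Integrable (fun ω => ∑ i, ∑ j, (n i * n j) * (θhat i ω * θhat j ω)) μ :=
      integrable_finset_sum _ fun i _ =>
        integrable_finset_sum _ fun j _ => (hprod_int i j).const_mul _
    exact h.congr (Filter.Eventually.of_forall fun ω => (hS2 ω).symm)
  have hS2val : ∫ ω, (∑ j, n j * θhat j ω) ^ 2 ∂μ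
      = N ^ 2 * θ ^ 2 + ∑ i, n i ^ 2 * σ2 i := by
    rw [integral_congr_ae (Filter.Eventually.of_forall hS2),
      integral_finset_sum _ (fun i _ =>
        integrable_finset_sum _ fun j _ => (hprod_int i j).const_mul _)]
    have step1 : ∀ i ∈ Finset.univ,
        ∫ ω, ∑ j, (n i * n j) * (θhat i ω * θhat j ω) ∂μ
          = n i * N * θ ^ 2 + n i ^ 2 * σ2 i := by
      intro i _
      rw [integral_finset_sum _ (fun j _ => (hprod_int i j).const_mul _)]
      have : ∀ j ∈ Finset.univ, ∫ ω, (n i * n j) * (θhat i ω * θhat j ω) ∂μ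
          = n i * n j * θ ^ 2 + (if i = j then n i ^ 2 * σ2 i else 0) := by
        intro j _
        rw [integral_const_mul]
        exact hprod_val i j
      rw [Finset.sum_congr rfl this, Finset.sum_add_distrib, Finset.sum_ite_eq]
      simp only [Finset.mem_univ, if_true]
      congr 1
      have : ∀ j ∈ Finset.univ, n i * n j * θ ^ 2 = (n i * θ ^ 2) * n j :=
        fun j _ => by ring
      rw [Finset.sum_congr rfl this, ← Finset.mul_sum, ← hN]
      ring
    rw [Finset.sum_congr rfl step1, Finset.sum_add_distrib]
    congr 1
    have : ∀ i ∈ Finset.univ, n i * N * θ ^ 2 = (N * θ ^ 2) * n i := fun i _ => by ring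
    rw [Finset.sum_congr rfl this, ← Finset.mul_sum, ← hN]
    ring
  -- sum of n ℓ * E[θhat ℓ ^ 2]
  have hf1int : Integrable (fun ω => ∑ ℓ, n ℓ * θhat ℓ ω ^ 2) μ :=
    integrable_finset_sum _ fun ℓ _ => (hint2 ℓ).const_mul _
  have hf1val : ∫ ω, ∑ ℓ, n ℓ * θhat ℓ ω ^ 2 ∂μ = N * θ ^ 2 + ∑ ℓ, n ℓ * σ2 ℓ := by
    rw [integral_finset_sum _ (fun ℓ _ => (hint2 ℓ).const_mul _)]
    have : ∀ ℓ ∈ Finset.univ, ∫ ω, n ℓ * θhat ℓ ω ^ 2 ∂μ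
        = θ ^ 2 * n ℓ + n ℓ * σ2 ℓ := by
      intro ℓ _
      rw [integral_const_mul, hE2 ℓ]
      ring
    rw [Finset.sum_congr rfl this, Finset.sum_add_distrib, ← Finset.mul_sum, ← hN]
    congr 1
    ring
  -- compute sums involving σ2
  have hA : ∑ ℓ, n ℓ * σ2 ℓ = τ2 * N + k := by
    have : ∀ ℓ ∈ Finset.univ, n ℓ * σ2 ℓ = τ2 * n ℓ + 1 := by
      intro ℓ _
      have h := (hn ℓ).ne'
      rw [hσ2]
      field_simp
      try ring
    rw [Finset.sum_congr rfl this, Finset.sum_add_distrib, ← Finset.mul_sum, ← hN]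
    simp [Finset.card_univ]
  have hB : ∑ ℓ, n ℓ ^ 2 * σ2 ℓ = τ2 * (∑ ℓ, n ℓ ^ 2) + N := by
    have : ∀ ℓ ∈ Finset.univ, n ℓ ^ 2 * σ2 ℓ = τ2 * n ℓ ^ 2 + n ℓ := by
      intro ℓ _
      have h := (hn ℓ).ne'
      rw [hσ2]
      field_simp
      try ring
    rw [Finset.sum_congr rfl this, Finset.sum_add_distrib, ← Finset.mul_sum, ← hN]
  -- put everything together
  rw [integral_congr_ae (Filter.Eventually.of_forall hptw)]
  have hdiv : Integrable (fun ω => (∑ j, n j * θhat j ω) ^ 2 / N) μ := hS2int.div_const N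
  rw [integral_sub hf1int hdiv, integral_div, hS2val, hf1val, hA, hB]
  field_simp
  ring
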